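/- Let I be a good ideal in K[x_1,…,x_n] and let a_1,…,a_n and b_1,…,b_n be nonnegative integers with a_i ≤ b_i for all i. Then I_{a_1,…,a_n} ⊆ I_{b_1,…,b_n}. -/

import Mathlib

set_option maxHeartbeats 1000000


open MvPolynomial

namespace GasanovaRR

/-- The monomial `x^α` in `K[x_1,…,x_n]`. -/
noncomputable def mono (K : Type*) [Field K] {n : ℕ} (α : Fin n → ℕ) :
    MvPolynomial (Fin n) K :=
  MvPolynomial.monomial (Finsupp.equivFunOnFinite.symm α) 1

/-- `I` is a monomial ideal: it is generated by a set of monomials. -/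
def IsMonomialIdeal {K : Type*} [Field K] {n : ℕ}
    (I : Ideal (MvPolynomial (Fin n) K)) : Prop :=
  ∃ A : Set (Fin n → ℕ), I = Ideal.span (mono K '' A)

/-- `x^α` is a minimal monomial generator of `I`, i.e. `x^α ∈ G(I)`:
`x^α ∈ I` and no monomial in `I` strictly divides it. -/
def IsMinGen {K : Type*} [Field K] {n : ℕ}
    (I : Ideal (MvPolynomial (Fin n) K)) (α : Fin n → ℕ) : Prop :=
  mono K α ∈ I ∧ ∀ β : Fin n → ℕ, mono K β ∈ I → β ≤ α → β = α

/-- The point `α` lies in the box `B_{a_1,…,a_n}` (for box sizes `d_1,…,d_n`). -/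
def InBox {n : ℕ} (d a α : Fin n → ℕ) : Prop :=
  ∀ i, a i * d i ≤ α i ∧ α i ≤ (a i + 1) * d i

/-- `I` is a good ideal (w.r.t. box sizes `d`): for every `l ≥ 1`, every minimal
generator of `I^l` lies in a box whose coordinate sum is `l - 1`. -/
def IsGood {K : Type*} [Field K] {n : ℕ}
    (I : Ideal (MvPolynomial (Fin n) K)) (d : Fin n → ℕ) : Prop :=
  ∀ l : ℕ, 1 ≤ l → ∀ α : Fin n → ℕ, IsMinGen (I ^ l) α →
    ∃ a : Fin n → ℕ, InBox d a α ∧ ∑ i, a i = l - 1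

/-- `I` is an `𝔪`-primary monomial ideal whose minimal generating set contains
`μ_i = x_i^{d_i}` with `d_i > 0` for each `i`. -/
def MPrimaryWithCorners {K : Type*} [Field K] {n : ℕ}
    (I : Ideal (MvPolynomial (Fin n) K)) (d : Fin n → ℕ) : Prop :=
  IsMonomialIdeal I ∧ I ≠ ⊤ ∧ (∀ i, 0 < d i) ∧ ∀ i, IsMinGen I (Pi.single i (d i))

/-- The ideal `I_{a_1,…,a_n}` associated to the box `B_{a_1,…,a_n}`, generated by
`m / (μ_1^{a_1}⋯μ_n^{a_n})` for `m ∈ B_{a_1,…,a_n} ∩ G(I^l)`, `l = a_1+⋯+a_n+1`. -/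
noncomputable def boxIdeal {K : Type*} [Field K] {n : ℕ}
    (I : Ideal (MvPolynomial (Fin n) K)) (d a : Fin n → ℕ) :
    Ideal (MvPolynomial (Fin n) K) :=
  Ideal.span ((fun α => mono K (α - fun i => a i * d i)) ''
    {α | InBox d a α ∧ IsMinGen (I ^ (∑ i, a i + 1)) α})

/-- The Ratliff–Rush closure `Ĩ = ⋃_{k ≥ 0} (I^{k+1} : I^k)`. -/
noncomputable def ratliffRush {K : Type*} [Field K] {n : ℕ}
    (I : Ideal (MvPolynomial (Fin n) K)) : Ideal (MvPolynomial (Fin n) K) :=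
  ⨆ k : ℕ, (I ^ (k + 1)).colon ((I ^ k : Ideal (MvPolynomial (Fin n) K)) : Set (MvPolynomial (Fin n) K))

/-- The cone in `ℕ^n` with set `S` of fixed coordinates and vertex `v`. -/
def Cone {n : ℕ} (S : Set (Fin n)) (v : Fin n → ℕ) : Set (Fin n → ℕ) :=
  {b | (∀ i ∈ S, b i = v i) ∧ ∀ i ∉ S, v i ≤ b i}

/-- `I` is a very good ideal: it is good and `I_{a_1,…,a_n} = I` for all boxes. -/
def IsVeryGood {K : Type*} [Field K] {n : ℕ}
    (I : Ideal (MvPolynomial (Fin n) K)) (d : Fin n → ℕ) : Prop :=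
  IsGood I d ∧ ∀ a : Fin n → ℕ, boxIdeal I d a = I

section AuxiliaryLemmas

variable {K : Type*} [Field K] {n : ℕ}

lemma mono_mul (x y : Fin n → ℕ) : mono K x * mono K y = mono K (x + y) := by
  have h : Finsupp.equivFunOnFinite.symm x + Finsupp.equivFunOnFinite.symm y
      = Finsupp.equivFunOnFinite.symm (x + y) := by
    ext i; simp
  simp only [mono, MvPolynomial.monomial_mul, one_mul, h]

lemma mono_zero : (mono K (0 : Fin n → ℕ)) = 1 := by
  have h0 : Finsupp.equivFunOnFinite.symm (0 : Fin n → ℕ) = 0 := by ext i; simp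
  simp only [mono, h0, monomial_zero', C_1]

lemma mono_pow (x : Fin n → ℕ) (m : ℕ) : (mono K x) ^ m = mono K (m • x) := by
  induction m with
  | zero =>
    have h0 : ((0:ℕ) • x) = (0 : Fin n → ℕ) := zero_smul _ _
    rw [pow_zero, h0, mono_zero]
  | succ k ih =>
    rw [pow_succ, ih, mono_mul, succ_nsmul]

lemma mono_mem_span_iff {S : Set (Fin n → ℕ)} {β : Fin n → ℕ} :
    mono K β ∈ Ideal.span (mono K '' S) ↔ ∃ s ∈ S, s ≤ β := by
  have himg : mono K '' S =
      (fun s => monomial s (1 : K)) '' (Finsupp.equivFunOnFinite.symm '' S) := by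
    rw [Set.image_image]; rfl
  rw [himg, mem_ideal_span_monomial_image]
  constructor
  · intro h
    have hsup : (Finsupp.equivFunOnFinite.symm β) ∈ (mono K β).support := by
      simp [mono, support_monomial]
    obtain ⟨si, ⟨s, hs, rfl⟩, hle⟩ := h _ hsup
    exact ⟨s, hs, fun i => hle i⟩
  · rintro ⟨s, hs, hle⟩ xi hxi
    have : xi = Finsupp.equivFunOnFinite.symm β := by
      have := hxi
      classical
      simp only [mono, support_monomial, one_ne_zero, if_false, Finset.mem_singleton] at this
      exact this
    subst this
    exact ⟨_, ⟨s, hs, rfl⟩, fun i => hle i⟩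


/-- set of sums of `L` elements of `A` -/
def sumsOf (A : Set (Fin n → ℕ)) : ℕ → Set (Fin n → ℕ)
  | 0 => {0}
  | L + 1 => Set.image2 (· + ·) (sumsOf A L) A

lemma span_pow (A : Set (Fin n → ℕ)) (L : ℕ) :
    (Ideal.span (mono K '' A)) ^ L = Ideal.span (mono K '' sumsOf A L) := by
  induction L with
  | zero =>
    rw [pow_zero, sumsOf]
    rw [Set.image_singleton, mono_zero, Ideal.span_singleton_one, Ideal.one_eq_top]
  | succ L ih =>
    rw [pow_succ, ih, Ideal.span_mul_span', sumsOf]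
    congr 1
    ext q
    constructor
    · rintro ⟨_, ⟨x, hx, rfl⟩, _, ⟨y, hy, rfl⟩, rfl⟩
      exact ⟨x + y, Set.mem_image2_of_mem hx hy, (mono_mul x y).symm⟩
    · rintro ⟨_, ⟨x, hx, y, hy, rfl⟩, rfl⟩
      exact ⟨mono K x, ⟨x, hx, rfl⟩, mono K y, ⟨y, hy, rfl⟩, mono_mul x y⟩

lemma mem_pow_iff {I : Ideal (MvPolynomial (Fin n) K)} {A : Set (Fin n → ℕ)}
    (hA : I = Ideal.span (mono K '' A)) (L : ℕ) (σ : Fin n → ℕ) :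
    mono K σ ∈ I ^ L ↔ ∃ s ∈ sumsOf A L, s ≤ σ := by
  rw [hA, span_pow, mono_mem_span_iff]

lemma mono_mem_pow_of_le {I : Ideal (MvPolynomial (Fin n) K)} {A : Set (Fin n → ℕ)}
    (hA : I = Ideal.span (mono K '' A)) {L : ℕ} {x y : Fin n → ℕ}
    (h : mono K x ∈ I ^ L) (hxy : x ≤ y) : mono K y ∈ I ^ L := by
  rw [mem_pow_iff hA] at h ⊢
  obtain ⟨s, hs, hle⟩ := h
  exact ⟨s, hs, hle.trans hxy⟩

lemma exists_minGen {J : Ideal (MvPolynomial (Fin n) K)} :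
    ∀ (N : ℕ) (σ : Fin n → ℕ), (∑ i, σ i ≤ N) → mono K σ ∈ J →
      ∃ δ, δ ≤ σ ∧ IsMinGen J δ := by
  intro N
  induction N with
  | zero =>
    intro σ hσ hmem
    refine ⟨σ, le_refl _, hmem, fun β hβ hle => ?_⟩
    funext i
    have h1 := hle i
    have h2 : σ i = 0 :=
      Finset.sum_eq_zero_iff.mp (Nat.le_zero.mp hσ) i (Finset.mem_univ i)
    rw [h2]
    exact Nat.le_zero.mp (h2 ▸ h1)
  | succ N ih =>
    intro σ hσ hmem
    by_cases hmin : ∀ β : Fin n → ℕ, mono K β ∈ J → β ≤ σ → β = σ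
    · exact ⟨σ, le_refl _, hmem, hmin⟩
    · push_neg at hmin
      obtain ⟨β, hβJ, hβle, hβne⟩ := hmin
      have hlt : ∑ i, β i < ∑ i, σ i := by
        apply Finset.sum_lt_sum (fun i _ => hβle i)
        by_contra h
        push_neg at h
        exact hβne (funext fun i => le_antisymm (hβle i) (h i (Finset.mem_univ i)))
      obtain ⟨δ, hδle, hδ⟩ := ih β (by omega) hβJ
      exact ⟨δ, hδle.trans hβle, hδ⟩

/-- the weight of an exponent vector -/
def wt (d t : Fin n → ℕ) : ℕ := ∑ j, t j * ((∏ i, d i) / d j)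

lemma d_mul_w (d : Fin n → ℕ) (hd : ∀ i, 0 < d i) (j : Fin n) :
    d j * ((∏ i, d i) / d j) = ∏ i, d i :=
  Nat.mul_div_cancel' (Finset.dvd_prod_of_mem d (Finset.mem_univ j))

lemma wt_lt_of_lt (d : Fin n → ℕ) (hd : ∀ i, 0 < d i) {x y : Fin n → ℕ}
    (hle : x ≤ y) (hne : x ≠ y) : wt d x < wt d y := by
  have hD : 0 < ∏ i, d i := Finset.prod_pos fun i _ => hd i
  have hw : ∀ j, 0 < (∏ i, d i) / d j := by
    intro j
    have := d_mul_w d hd j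
    by_contra h
    push_neg at h
    interval_cases h' : ((∏ i, d i) / d j) <;> omega
  apply Finset.sum_lt_sum
  · exact fun i _ => Nat.mul_le_mul_right _ (hle i)
  · have hi : ∃ i, x i ≠ y i := by
      by_contra h
      push_neg at h
      exact hne (funext h)
    obtain ⟨i, hi⟩ := hi
    exact ⟨i, Finset.mem_univ i,
      mul_lt_mul_of_pos_right (lt_of_le_of_ne (hle i) hi) (hw i)⟩
lemma wt_le_of_le (d : Fin n → ℕ) {x y : Fin n → ℕ} (hle : x ≤ y) : wt d x ≤ wt d y :=
  Finset.sum_le_sum fun i _ => Nat.mul_le_mul_right _ (hle i)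
lemma wt_add (d x y : Fin n → ℕ) : wt d (x + y) = wt d x + wt d y := by
  unfold wt
  rw [← Finset.sum_add_distrib]
  exact Finset.sum_congr rfl fun j _ => by rw [Pi.add_apply, Nat.add_mul]


lemma sum_lt_of_le_of_ne {x y : Fin n → ℕ} (hle : x ≤ y) (hne : x ≠ y) :
    ∑ i, x i < ∑ i, y i := by
  apply Finset.sum_lt_sum (fun i _ => hle i)
  have hi : ∃ i, x i ≠ y i := by
    by_contra h; push_neg at h; exact hne (funext h)
  obtain ⟨i, hi⟩ := hi
  exact ⟨i, Finset.mem_univ i, lt_of_le_of_ne (hle i) hi⟩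

section MainAux

variable {I : Ideal (MvPolynomial (Fin n) K)} {A : Set (Fin n → ℕ)} {d : Fin n → ℕ}

/-- Step 1: every monomial in `I` has weight at least `D = ∏ d i`. -/
lemma wt_ge_of_mem (hA : I = Ideal.span (mono K '' A)) (hd : ∀ i, 0 < d i)
    (hgood : IsGood I d) {t : Fin n → ℕ} (ht : mono K t ∈ I) :
    (∏ i, d i) ≤ wt d t := by
  set D := ∏ i, d i with hDdef
  have hD : 0 < D := Finset.prod_pos fun i _ => hd i
  have hmem : mono K ((D + 1) • t) ∈ I ^ (D + 1) := by
    rw [← mono_pow]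
    exact Ideal.pow_mem_pow ht _
  obtain ⟨δ, hδle, hmin⟩ := exists_minGen (∑ i, (D + 1) • t i) _ le_rfl hmem
  obtain ⟨c, hbox, hsum⟩ := hgood (D + 1) (by omega) δ hmin
  have key : ∀ j, c j * D ≤ (D + 1) * (t j * (D / d j)) := by
    intro j
    have h1 : c j * d j ≤ (D + 1) * t j := le_trans (hbox j).1 (hδle j)
    calc c j * D = c j * d j * (D / d j) := by rw [Nat.mul_assoc, d_mul_w d hd j]
      _ ≤ (D + 1) * t j * (D / d j) := Nat.mul_le_mul_right _ h1
      _ = (D + 1) * (t j * (D / d j)) := Nat.mul_assoc _ _ _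
  have hsum2 : D * D ≤ (D + 1) * wt d t := by
    calc D * D = (∑ i, c i) * D := by rw [hsum]; norm_num
      _ = ∑ i, c i * D := Finset.sum_mul _ _ _
      _ ≤ ∑ j, (D + 1) * (t j * (D / d j)) := Finset.sum_le_sum fun j _ => key j
      _ = (D + 1) * wt d t := by rw [wt, Finset.mul_sum]
  nlinarith [hsum2, hD]

/-- Step 1': every monomial in `I ^ L` has weight at least `L * D`. -/
lemma wt_ge_of_mem_pow (hA : I = Ideal.span (mono K '' A)) (hd : ∀ i, 0 < d i)
    (hgood : IsGood I d) {L : ℕ} {σ : Fin n → ℕ} (hσ : mono K σ ∈ I ^ L) :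
    L * (∏ i, d i) ≤ wt d σ := by
  rw [mem_pow_iff hA] at hσ
  obtain ⟨s, hs, hle⟩ := hσ
  refine le_trans ?_ (wt_le_of_le d hle)
  clear hle
  induction L generalizing s with
  | zero => simp
  | succ L ih =>
    obtain ⟨x, hx, a, ha, rfl⟩ := hs
    rw [wt_add, Nat.succ_mul]
    have haI : mono K a ∈ I := by
      rw [hA]; exact Ideal.subset_span ⟨a, ha, rfl⟩
    exact Nat.add_le_add (ih x hx) (wt_ge_of_mem hA hd hgood haI)

/-- adding multiples of the corner generators to an element of `I^s`. -/
lemma mono_add_mu (hA : I = Ideal.span (mono K '' A)) (hd : ∀ i, 0 < d i)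
    (hmu : ∀ i, mono K (Pi.single i (d i)) ∈ I) :
    ∀ (N : ℕ) (k : Fin n → ℕ), (∑ i, k i ≤ N) → ∀ (s : ℕ) (x : Fin n → ℕ),
      mono K x ∈ I ^ s → mono K (fun j => x j + k j * d j) ∈ I ^ (s + ∑ i, k i) := by
  intro N
  induction N with
  | zero =>
    intro k hk s x hx
    have hk0 : ∀ i, k i = 0 := by
      intro i
      have := Finset.sum_eq_zero_iff.mp (Nat.le_zero.mp hk) i (Finset.mem_univ i)
      exact this
    have h1 : (fun j => x j + k j * d j) = x := by funext j; rw [hk0 j]; ring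
    have h2 : ∑ i, k i = 0 := Nat.le_zero.mp hk
    rw [h1, h2]
    exact hx
  | succ N ih =>
    intro k hk s x hx
    by_cases hz : ∑ i, k i = 0
    · have hk0 : ∀ i, k i = 0 := fun i =>
        Finset.sum_eq_zero_iff.mp hz i (Finset.mem_univ i)
      have h1 : (fun j => x j + k j * d j) = x := by funext j; rw [hk0 j]; ring
      rw [h1, hz]
      exact hx
    · have hp : ∃ p, 0 < k p := by
        by_contra h
        push_neg at h
        exact hz (Finset.sum_eq_zero fun i _ => Nat.le_zero.mp (h i))
      obtain ⟨p, hp⟩ := hp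
      obtain ⟨m, hm⟩ : ∃ m, k p = m + 1 := ⟨k p - 1, by omega⟩
      have hx' : mono K (x + Pi.single p (d p)) ∈ I ^ (s + 1) := by
        rw [← mono_mul, pow_succ]
        exact Ideal.mul_mem_mul hx (hmu p)
      have e1 := Finset.sum_erase_add Finset.univ k (Finset.mem_univ p)
      have e2 := Finset.sum_erase_add Finset.univ
        (fun j => if j = p then m else k j) (Finset.mem_univ p)
      have e3 : (∑ j ∈ Finset.univ.erase p, if j = p then m else k j)
          = ∑ j ∈ Finset.univ.erase p, k j :=
        Finset.sum_congr rfl fun j hj => if_neg (Finset.ne_of_mem_erase hj)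
      simp only [eq_self_iff_true, if_true] at e2
      have hk'sum : (∑ j, if j = p then m else k j) + 1 = ∑ j, k j := by omega
      have hle' : (∑ j, if j = p then m else k j) ≤ N := by omega
      have := ih (fun j => if j = p then m else k j) hle' (s + 1)
        (x + Pi.single p (d p)) (by exact hx')
      have heq : (fun j => ((x + Pi.single p (d p) : Fin n → ℕ)) j + (if j = p then m else k j) * d j)
          = (fun j => x j + k j * d j) := by
        funext j
        by_cases hj : j = p
        · subst hj
          simp only [Pi.add_apply, Pi.single_eq_same, eq_self_iff_true, if_true, hm]
          ring
        · simp only [Pi.add_apply, Pi.single_eq_of_ne hj, if_neg hj]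
          ring
      rw [heq] at this
      have harith : s + 1 + (∑ j, if j = p then m else k j) = s + ∑ i, k i := by omega
      rwa [harith] at this

lemma kl_fix (hA : I = Ideal.span (mono K '' A)) (hd : ∀ i, 0 < d i)
    (hgood : IsGood I d) (hmu : ∀ i, mono K (Pi.single i (d i)) ∈ I)
    {g γ : Fin n → ℕ} {L : ℕ} (hL : L = ∑ i, g i + 1) (hγI : mono K γ ∈ I ^ L)
    (hlow : ∀ j, g j * d j ≤ γ j) (hhigh : ∀ j, γ j ≤ (g j + 1) * d j)
    (hfix : ∀ σ : Fin n → ℕ, σ ≤ γ → (∀ j, g j * d j ≤ σ j) →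
      mono K σ ∈ I ^ L → σ = γ) :
    IsMinGen (I ^ L) γ := by
  by_cases hcor : ∃ p, γ p = (g p + 1) * d p
  · -- corner case: γ is forced to be g·d + μ_p and is weight-minimal
    obtain ⟨p, hp⟩ := hcor
    have hσmem : mono K (fun j => (g j + (Pi.single p 1 : Fin n → ℕ) j) * d j) ∈ I ^ L := by
      have h0 : mono K (0 : Fin n → ℕ) ∈ I ^ (0 : ℕ) := by
        rw [pow_zero, Ideal.one_eq_top]; trivial
      have h1 := mono_add_mu hA hd hmu (∑ i, (g i + (Pi.single p 1 : Fin n → ℕ) i))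
        (fun i => g i + (Pi.single p 1 : Fin n → ℕ) i) le_rfl 0 0 h0
      have hsum : (∑ i, (g i + (Pi.single p 1 : Fin n → ℕ) i)) = L := by
        rw [Finset.sum_add_distrib, Finset.sum_pi_single' p 1]
        simp [hL]
      have hfun : (fun j => (0 : Fin n → ℕ) j + (g j + (Pi.single p 1 : Fin n → ℕ) j) * d j)
          = (fun j => (g j + (Pi.single p 1 : Fin n → ℕ) j) * d j) := by
        funext j; simp
      rw [hfun, hsum, Nat.zero_add] at h1
      exact h1
    have hσle : (fun j => (g j + (Pi.single p 1 : Fin n → ℕ) j) * d j) ≤ γ := by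
      intro j
      by_cases hj : j = p
      · subst hj; simp only [Pi.single_eq_same]; exact le_of_eq hp.symm
      · simp only [Pi.single_eq_of_ne hj]
        simpa using hlow j
    have hσge : ∀ j, g j * d j ≤ (g j + (Pi.single p 1 : Fin n → ℕ) j) * d j :=
      fun j => Nat.mul_le_mul_right _ (Nat.le_add_right _ _)
    have hγeq : γ = fun j => (g j + (Pi.single p 1 : Fin n → ℕ) j) * d j :=
      (hfix _ hσle hσge hσmem).symm
    refine ⟨hγI, fun β hβ hle => ?_⟩
    by_contra hne
    have hw1 := wt_ge_of_mem_pow hA hd hgood hβ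
    have hw2 : wt d γ = L * (∏ i, d i) := by
      rw [hγeq]
      unfold wt
      have : ∀ j, ((g j + (Pi.single p 1 : Fin n → ℕ) j) * d j) * ((∏ i, d i) / d j)
          = (g j + (Pi.single p 1 : Fin n → ℕ) j) * (∏ i, d i) := by
        intro j; rw [Nat.mul_assoc, d_mul_w d hd j]
      rw [Finset.sum_congr rfl fun j _ => this j, ← Finset.sum_mul,
        Finset.sum_add_distrib, Finset.sum_pi_single' p 1]
      simp [hL]
    have hw3 := wt_lt_of_lt d hd hle hne
    omega
  · -- interior case: box-count contradiction
    push_neg at hcor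
    refine ⟨hγI, fun β hβ hle => ?_⟩
    by_contra hne
    obtain ⟨δ, hδle, hδmin⟩ := exists_minGen (∑ i, β i) β le_rfl hβ
    have hδγ : δ ≤ γ := hδle.trans hle
    have hjoin : (fun j => max (δ j) (g j * d j)) = γ :=
      hfix _ (fun j => max_le (hδγ j) (hlow j)) (fun j => le_max_right _ _)
        (mono_mem_pow_of_le hA hδmin.1 (fun j => le_max_left _ _))
    have hm : ∃ m, β m < γ m := by
      by_contra h
      push_neg at h
      exact hne (le_antisymm hle h)
    obtain ⟨m, hm⟩ := hm
    have hδm : δ m < γ m := lt_of_le_of_lt (hδle m) hm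
    have hγm : γ m = g m * d m := by
      have := congrFun hjoin m
      omega
    obtain ⟨c, hbox, hcsum⟩ := hgood L (by omega) δ hδmin
    have hcle : ∀ j, c j ≤ g j := by
      intro j
      have h1 : c j * d j < (g j + 1) * d j :=
        lt_of_le_of_lt ((hbox j).1.trans (hδγ j)) (lt_of_le_of_ne (hhigh j) (hcor j))
      have := Nat.lt_of_mul_lt_mul_right h1
      omega
    have hcm : c m < g m := by
      have h1 : c m * d m < g m * d m := by
        have := (hbox m).1
        omega
      exact Nat.lt_of_mul_lt_mul_right h1
    have hlt : ∑ i, c i < ∑ i, g i :=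
      Finset.sum_lt_sum (fun i _ => hcle i) ⟨m, Finset.mem_univ m, hcm⟩
    omega

lemma kl_star (hA : I = Ideal.span (mono K '' A)) (hd : ∀ i, 0 < d i)
    (hgood : IsGood I d) (hmu : ∀ i, mono K (Pi.single i (d i)) ∈ I) :
    ∀ (N : ℕ) (g γ : Fin n → ℕ) (L : ℕ), L = ∑ i, g i + 1 → ∑ i, γ i ≤ N →
      mono K γ ∈ I ^ L → (∀ j, g j * d j ≤ γ j) → (∀ j, γ j ≤ (g j + 1) * d j) →
      ∃ β, IsMinGen (I ^ L) β ∧ (∀ j, g j * d j ≤ β j) ∧ β ≤ γ := by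
  intro N
  induction N with
  | zero =>
    intro g γ L hL hN hγ hlow hhigh
    have hfix : ∀ σ : Fin n → ℕ, σ ≤ γ → (∀ j, g j * d j ≤ σ j) →
        mono K σ ∈ I ^ L → σ = γ := by
      intro σ h1 h2 h3
      by_contra hne
      have := sum_lt_of_le_of_ne h1 hne
      omega
    exact ⟨γ, kl_fix hA hd hgood hmu hL hγ hlow hhigh hfix, hlow, le_refl γ⟩
  | succ N ih =>
    intro g γ L hL hN hγ hlow hhigh
    by_cases hfix : ∀ σ : Fin n → ℕ, σ ≤ γ → (∀ j, g j * d j ≤ σ j) →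
        mono K σ ∈ I ^ L → σ = γ
    · exact ⟨γ, kl_fix hA hd hgood hmu hL hγ hlow hhigh hfix, hlow, le_refl γ⟩
    · push_neg at hfix
      obtain ⟨σ, h1, h2, h3, hne⟩ := hfix
      have hlt := sum_lt_of_le_of_ne h1 hne
      obtain ⟨β, hβ1, hβ2, hβ3⟩ := ih g σ L hL (by omega) h3 h2
        (fun j => (h1 j).trans (hhigh j))
      exact ⟨β, hβ1, hβ2, hβ3.trans h1⟩

end MainAux

end AuxiliaryLemmas

/-- Corollary 4.5: for a good ideal `I`, if `a_i ≤ b_i` for all `i`, then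
`I_{a_1,…,a_n} ⊆ I_{b_1,…,b_n}`. -/
theorem boxIdeal_mono {K : Type*} [Field K] {n : ℕ}
    (I : Ideal (MvPolynomial (Fin n) K)) (d : Fin n → ℕ)
    (hI : MPrimaryWithCorners I d) (hgood : IsGood I d)
    (a b : Fin n → ℕ) (hab : a ≤ b) :
    boxIdeal I d a ≤ boxIdeal I d b := by
  obtain ⟨⟨A, hA⟩, -, hd, hcorner⟩ := hI
  have hmu : ∀ i, mono K (Pi.single i (d i)) ∈ I := fun i => (hcorner i).1
  rw [boxIdeal, Ideal.span_le]
  rintro _ ⟨α, ⟨hbox, hmin⟩, rfl⟩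
  -- α* = α + (b - a) d
  set αs : Fin n → ℕ := fun i => α i + (b i - a i) * d i with hαs
  have hprod : ∀ i, (b i - a i) * d i + a i * d i = b i * d i := by
    intro i
    rw [← Nat.add_mul, Nat.sub_add_cancel (hab i)]
  have hmem : mono K αs ∈ I ^ ((∑ i, a i + 1) + ∑ i, (b i - a i)) :=
    mono_add_mu hA hd hmu (∑ i, (b i - a i)) (fun i => b i - a i) le_rfl
      (∑ i, a i + 1) α hmin.1
  have hLeq : (∑ i, a i + 1) + ∑ i, (b i - a i) = ∑ i, b i + 1 := by
    have : ∑ i, a i + ∑ i, (b i - a i) = ∑ i, b i := by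
      rw [← Finset.sum_add_distrib]
      exact Finset.sum_congr rfl fun i _ => Nat.add_sub_cancel' (hab i)
    omega
  rw [hLeq] at hmem
  have hlow : ∀ j, b j * d j ≤ αs j := by
    intro j
    have h1 := (hbox j).1
    have h2 := hprod j
    show b j * d j ≤ α j + (b j - a j) * d j
    omega
  have hhigh : ∀ j, αs j ≤ (b j + 1) * d j := by
    intro j
    have h1 := (hbox j).2
    have h2 : (a j + 1) * d j + (b j - a j) * d j = (b j + 1) * d j := by
      rw [← Nat.add_mul, Nat.add_right_comm, Nat.add_sub_cancel' (hab j)]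
    show α j + (b j - a j) * d j ≤ (b j + 1) * d j
    omega
  obtain ⟨β, hβmin, hβlow, hβle⟩ := kl_star hA hd hgood hmu (∑ i, αs i) b αs
    (∑ i, b i + 1) rfl le_rfl hmem hlow hhigh
  have hβbox : InBox d b β := fun i => ⟨hβlow i, (hβle i).trans (hhigh i)⟩
  have hgen : mono K (β - fun i => b i * d i) ∈ boxIdeal I d b :=
    Ideal.subset_span ⟨β, ⟨hβbox, hβmin⟩, rfl⟩
  have heq : mono K (β - fun i => b i * d i) *
      mono K ((α - fun i => a i * d i) - (β - fun i => b i * d i))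
      = mono K (α - fun i => a i * d i) := by
    rw [mono_mul]
    congr 1
    funext i
    show (β i - b i * d i) + ((α i - a i * d i) - (β i - b i * d i))
        = α i - a i * d i
    have h1 := (hbox i).1
    have h2 := hβlow i
    have h3 : β i ≤ α i + (b i - a i) * d i := hβle i
    have h4 := hprod i
    omega
  show mono K (α - fun i => a i * d i) ∈ boxIdeal I d b
  rw [← heq]
  exact Ideal.mul_mem_right _ _ hgen

end GasanovaRR
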